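/- Uniqueness of the binary [6,3,3] code: Let C and C' be F_2-linear subspaces of F_2^6, each of dimension 3, such that every nonzero vector of C and every nonzero vector of C' has Hamming weight at least 3. Then C and C' are permutation equivalent: there exists a permutation σ of the 6 coordinate positions such that applying σ to the coordinates of the vectors of C yields exactly the code C'. -/

import Mathlib

open Finset

abbrev V6 := Fin 6 → ZMod 2

noncomputable section

def wt (w : V6) : ℕ := (Finset.univ.filter fun i => w i ≠ 0).card

lemma ne0_eq1 : ∀ c : ZMod 2, c ≠ 0 → c = 1 := by decide

lemma sum_wt (S : Finset V6) :
    ∑ v ∈ S, wt v = ∑ i : Fin 6, (S.filter fun v => v i ≠ 0).card := by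
  simp only [wt, Finset.card_filter]
  rw [Finset.sum_comm]

lemma add_inj_card (S : Finset V6) (u : V6)
    (A B : Finset V6) (h : ∀ x ∈ A, x + u ∈ B) : A.card ≤ B.card := by
  apply Finset.card_le_card_of_injOn (· + u) h
  intro a _ b _ hab
  exact add_right_cancel hab

/-- in a sum-closed set, at most half the elements are nonzero at coordinate `i` -/
lemma half (S : Finset V6) (hS : ∀ x ∈ S, ∀ y ∈ S, x + y ∈ S) (i : Fin 6) :
    2 * (S.filter fun v => v i ≠ 0).card ≤ S.card := by
  rcases Finset.eq_empty_or_nonempty (S.filter fun v => v i ≠ 0) with he | ⟨u, hu⟩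
  · rw [he]; simp
  · rw [Finset.mem_filter] at hu
    have h1 : (S.filter fun v => v i ≠ 0).card ≤ (S.filter fun v => ¬ v i ≠ 0).card := by
      apply add_inj_card S u
      intro x hx
      rw [Finset.mem_filter] at hx ⊢
      refine ⟨hS x hx.1 u hu.1, ?_⟩
      rw [not_not, Pi.add_apply, ne0_eq1 _ hx.2, ne0_eq1 _ hu.2]
      decide
    have h2 : (S.filter fun v => v i ≠ 0).card + (S.filter fun v => ¬ v i ≠ 0).card = S.card :=
      Finset.card_filter_add_card_filter_not _
    linarith

/-- with some nonzero value present, exactly half -/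
lemma half_eq (S : Finset V6) (hS : ∀ x ∈ S, ∀ y ∈ S, x + y ∈ S) (i : Fin 6)
    (u : V6) (hu : u ∈ S) (hui : u i ≠ 0) :
    2 * (S.filter fun v => v i ≠ 0).card = S.card := by
  have h1 := half S hS i
  have h3 : (S.filter fun v => ¬ v i ≠ 0).card ≤ (S.filter fun v => v i ≠ 0).card := by
    apply add_inj_card S u
    intro x hx
    rw [Finset.mem_filter] at hx ⊢
    rw [not_not] at hx
    refine ⟨hS x hx.1 u hu, ?_⟩
    rw [Pi.add_apply, hx.2, ne0_eq1 _ hui]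
    decide
  have h2 : (S.filter fun v => v i ≠ 0).card + (S.filter fun v => ¬ v i ≠ 0).card = S.card :=
    Finset.card_filter_add_card_filter_not _
  linarith

lemma code_cols (C : Submodule (ZMod 2) V6)
    (hC : Module.finrank (ZMod 2) ↥C = 3)
    (hwC : ∀ v ∈ C, v ≠ 0 → 3 ≤ (Finset.univ.filter fun i => v i ≠ 0).card) :
    (∀ i : Fin 6, ∃ u ∈ C, u i ≠ 0) ∧
    (∀ i j : Fin 6, i ≠ j → ∃ u ∈ C, u i ≠ u j) := by
  set T : Finset V6 := (Set.toFinite (↑C : Set V6)).toFinset with hT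
  have hmemT : ∀ v : V6, v ∈ T ↔ v ∈ C := by
    intro v; rw [hT, Set.Finite.mem_toFinset]; rfl
  have hclosed : ∀ x ∈ T, ∀ y ∈ T, x + y ∈ T := by
    intro x hx y hy
    rw [hmemT] at *
    exact C.add_mem hx hy
  have h0T : (0 : V6) ∈ T := (hmemT 0).2 C.zero_mem
  have hcard : T.card = 8 := by
    haveI : Fintype ↥C := Fintype.ofFinite _
    haveI : Fintype ↥(↑C : Set V6) := Fintype.ofFinite _
    have b : Module.Basis (Fin 3) (ZMod 2) ↥C := Module.finBasisOfFinrankEq _ _ hC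
    have h1 : Fintype.card ↥C = Fintype.card (Fin 3 → ZMod 2) :=
      Fintype.card_congr b.equivFun.toEquiv
    rw [Fintype.card_fun, ZMod.card] at h1
    simp only [Fintype.card_fin] at h1
    norm_num at h1
    rw [hT, Set.Finite.card_toFinset]
    rw [← h1]
    rfl
  have hwsum : 21 ≤ ∑ v ∈ T, wt v := by
    have h7 : (T.erase 0).card = 7 := by rw [Finset.card_erase_of_mem h0T, hcard]
    have h3 : ∀ v ∈ T.erase 0, 3 ≤ wt v := by
      intro v hv
      exact hwC v ((hmemT v).1 (Finset.mem_of_mem_erase hv)) (Finset.ne_of_mem_erase hv)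
    have h4 := Finset.card_nsmul_le_sum (T.erase 0) wt 3 h3
    rw [h7] at h4
    have h5 : ∑ v ∈ T.erase 0, wt v ≤ ∑ v ∈ T, wt v :=
      Finset.sum_le_sum_of_subset (Finset.erase_subset _ _)
    simp at h4
    linarith
  have hn4 : ∀ i : Fin 6, (T.filter fun v => v i ≠ 0).card ≤ 4 := by
    intro i
    have := half T hclosed i
    rw [hcard] at this
    linarith
  have hex : ∀ i : Fin 6, ∃ u ∈ T, u i ≠ 0 := by
    intro i
    by_contra hc
    push_neg at hc
    have hzero : (T.filter fun v => v i ≠ 0).card = 0 := by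
      rw [Finset.card_eq_zero, Finset.filter_eq_empty_iff]
      intro v hv
      simpa using hc v hv
    have hsum := sum_wt T
    have hsplit : ∑ k ∈ Finset.univ.erase i, (T.filter fun v => v k ≠ 0).card
        + (T.filter fun v => v i ≠ 0).card = ∑ k : Fin 6, (T.filter fun v => v k ≠ 0).card :=
      Finset.sum_erase_add _ _ (Finset.mem_univ i)
    have hbound : ∑ k ∈ Finset.univ.erase i, (T.filter fun v => v k ≠ 0).card ≤ 5 * 4 := by
      have := Finset.sum_le_card_nsmul (Finset.univ.erase i)
        (fun k => (T.filter fun v => v k ≠ 0).card) 4 (fun k _ => hn4 k)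
      have hc5 : (Finset.univ.erase i).card = 5 := by
        rw [Finset.card_erase_of_mem (Finset.mem_univ i)]
        simp
      rw [hc5] at this
      simpa using this
    linarith
  constructor
  · intro i
    obtain ⟨u, hu, hui⟩ := hex i
    exact ⟨u, (hmemT u).1 hu, hui⟩
  · intro i j hij
    by_contra hc
    push_neg at hc
    have heq : ∀ v ∈ T, v i = v j := by
      intro v hv
      by_contra hne
      exact hne (hc v ((hmemT v).1 hv))
    -- the subcode vanishing at coordinate i
    set S' : Finset V6 := T.filter (fun v => v i = 0) with hS'
    have hclosed' : ∀ x ∈ S', ∀ y ∈ S', x + y ∈ S' := by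
      intro x hx y hy
      rw [hS', Finset.mem_filter] at hx hy ⊢
      exact ⟨hclosed x hx.1 y hy.1, by rw [Pi.add_apply, hx.2, hy.2]; rfl⟩
    have h0S' : (0 : V6) ∈ S' := by
      rw [hS', Finset.mem_filter]
      exact ⟨h0T, rfl⟩
    have hni : 2 * (T.filter fun v => v i ≠ 0).card = 8 := by
      obtain ⟨u, hu, hui⟩ := hex i
      rw [← hcard]
      exact half_eq T hclosed i u hu hui
    have hcS' : S'.card = 4 := by
      have h2 : (T.filter fun v => v i ≠ 0).card + (T.filter fun v => ¬ v i ≠ 0).card = T.card :=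
        Finset.card_filter_add_card_filter_not _
      have h3 : (T.filter fun v => ¬ v i ≠ 0) = S' := by
        rw [hS']
        apply Finset.filter_congr
        intro v _
        simp
      rw [h3, hcard] at h2
      linarith
    have hm2 : ∀ k : Fin 6, (S'.filter fun v => v k ≠ 0).card ≤ 2 := by
      intro k
      have := half S' hclosed' k
      rw [hcS'] at this
      linarith
    have hmi : (S'.filter fun v => v i ≠ 0).card = 0 := by
      rw [Finset.card_eq_zero, Finset.filter_eq_empty_iff]
      intro v hv
      rw [hS', Finset.mem_filter] at hv
      simp [hv.2]
    have hmj : (S'.filter fun v => v j ≠ 0).card = 0 := by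
      rw [Finset.card_eq_zero, Finset.filter_eq_empty_iff]
      intro v hv
      rw [hS', Finset.mem_filter] at hv
      have := heq v hv.1
      rw [← this]
      simp [hv.2]
    have hsum := sum_wt S'
    have hsplit1 : ∑ k ∈ Finset.univ.erase i, (S'.filter fun v => v k ≠ 0).card
        + (S'.filter fun v => v i ≠ 0).card = ∑ k : Fin 6, (S'.filter fun v => v k ≠ 0).card :=
      Finset.sum_erase_add _ _ (Finset.mem_univ i)
    have hsplit2 : ∑ k ∈ (Finset.univ.erase i).erase j, (S'.filter fun v => v k ≠ 0).card
        + (S'.filter fun v => v j ≠ 0).card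
        = ∑ k ∈ Finset.univ.erase i, (S'.filter fun v => v k ≠ 0).card :=
      Finset.sum_erase_add _ _ (Finset.mem_erase.2 ⟨hij.symm, Finset.mem_univ j⟩)
    have hbound : ∑ k ∈ (Finset.univ.erase i).erase j, (S'.filter fun v => v k ≠ 0).card ≤ 4 * 2 := by
      have := Finset.sum_le_card_nsmul ((Finset.univ.erase i).erase j)
        (fun k => (S'.filter fun v => v k ≠ 0).card) 2 (fun k _ => hm2 k)
      have hc4 : ((Finset.univ.erase i).erase j).card = 4 := by
        rw [Finset.card_erase_of_mem (Finset.mem_erase.2 ⟨hij.symm, Finset.mem_univ j⟩),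
          Finset.card_erase_of_mem (Finset.mem_univ i)]
        simp
      rw [hc4] at this
      simpa using this
    have hlow : 9 ≤ ∑ v ∈ S', wt v := by
      have h3' : (S'.erase 0).card = 3 := by rw [Finset.card_erase_of_mem h0S', hcS']
      have h3 : ∀ v ∈ S'.erase 0, 3 ≤ wt v := by
        intro v hv
        have hvT : v ∈ T := by
          have := Finset.mem_of_mem_erase hv
          rw [hS', Finset.mem_filter] at this
          exact this.1
        exact hwC v ((hmemT v).1 hvT) (Finset.ne_of_mem_erase hv)
      have h4 := Finset.card_nsmul_le_sum (S'.erase 0) wt 3 h3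
      rw [h3'] at h4
      have h5 : ∑ v ∈ S'.erase 0, wt v ≤ ∑ v ∈ S', wt v :=
        Finset.sum_le_sum_of_subset (Finset.erase_subset _ _)
      simp at h4
      linarith
    linarith

def pm (σ : Equiv.Perm (Fin 6)) : V6 → V6 := fun v i => v (σ i)

lemma pm_pm (σ : Equiv.Perm (Fin 6)) (v : V6) : pm σ.symm (pm σ v) = v := by
  funext i; simp [pm]

lemma pm_inj (σ : Equiv.Perm (Fin 6)) : Function.Injective (pm σ) := by
  intro x y h
  rw [← pm_pm σ x, ← pm_pm σ y, h]

lemma code_ncard (C : Submodule (ZMod 2) V6)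
    (hC : Module.finrank (ZMod 2) ↥C = 3) : (↑C : Set V6).ncard = 8 := by
  have b : Module.Basis (Fin 3) (ZMod 2) ↥C := Module.finBasisOfFinrankEq _ _ hC
  have h1 : Nat.card ↥C = 8 := by
    rw [Nat.card_congr b.equivFun.toEquiv]
    simp [Nat.card_eq_fintype_card]
  rw [← Nat.card_coe_set_eq]
  exact h1

set_option maxHeartbeats 1000000 in
open Module in
lemma main_half (C C' : Submodule (ZMod 2) V6)
    (hC : Module.finrank (ZMod 2) ↥C = 3) (hC' : Module.finrank (ZMod 2) ↥C' = 3)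
    (hwC : ∀ v ∈ C, v ≠ 0 → 3 ≤ (Finset.univ.filter fun i => v i ≠ 0).card)
    (hwC' : ∀ v ∈ C', v ≠ 0 → 3 ≤ (Finset.univ.filter fun i => v i ≠ 0).card) :
    ∃ σ : Equiv.Perm (Fin 6), pm σ '' (↑C' : Set V6) = (↑C : Set V6) := by
  classical
  obtain ⟨hnz, hdis⟩ := code_cols C hC hwC
  obtain ⟨hnz', hdis'⟩ := code_cols C' hC' hwC'
  -- the coordinate functionals
  set ε : Fin 6 → Dual (ZMod 2) ↥C :=
    fun i => (LinearMap.proj i : V6 →ₗ[ZMod 2] ZMod 2).comp C.subtype with hε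
  set ε' : Fin 6 → Dual (ZMod 2) ↥C' :=
    fun i => (LinearMap.proj i : V6 →ₗ[ZMod 2] ZMod 2).comp C'.subtype with hε'
  have hεapp : ∀ (i : Fin 6) (x : ↥C), ε i x = (x : V6) i := fun _ _ => rfl
  have hεapp' : ∀ (i : Fin 6) (x : ↥C'), ε' i x = (x : V6) i := fun _ _ => rfl
  have hεne : ∀ i, ε i ≠ 0 := by
    intro i h
    obtain ⟨u, hu, hui⟩ := hnz i
    apply hui
    have : ε i ⟨u, hu⟩ = 0 := by rw [h]; rfl
    rwa [hεapp] at this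
  have hεne' : ∀ i, ε' i ≠ 0 := by
    intro i h
    obtain ⟨u, hu, hui⟩ := hnz' i
    apply hui
    have : ε' i ⟨u, hu⟩ = 0 := by rw [h]; rfl
    rwa [hεapp'] at this
  have hεinj : Function.Injective ε := by
    intro i j h
    by_contra hij
    obtain ⟨u, hu, huij⟩ := hdis i j hij
    apply huij
    have : ε i ⟨u, hu⟩ = ε j ⟨u, hu⟩ := by rw [h]
    rwa [hεapp, hεapp] at this
  have hεinj' : Function.Injective ε' := by
    intro i j h
    by_contra hij
    obtain ⟨u, hu, huij⟩ := hdis' i j hij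
    apply huij
    have : ε' i ⟨u, hu⟩ = ε' j ⟨u, hu⟩ := by rw [h]
    rwa [hεapp', hεapp'] at this
  -- dual spaces have 8 elements
  have bD : Basis (Fin 3) (ZMod 2) (Dual (ZMod 2) ↥C) :=
    Module.finBasisOfFinrankEq _ _ (by rw [Subspace.dual_finrank_eq, hC])
  have bD' : Basis (Fin 3) (ZMod 2) (Dual (ZMod 2) ↥C') :=
    Module.finBasisOfFinrankEq _ _ (by rw [Subspace.dual_finrank_eq, hC'])
  haveI : Fintype (Dual (ZMod 2) ↥C) := Fintype.ofEquiv _ bD.equivFun.toEquiv.symm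
  haveI : Fintype (Dual (ZMod 2) ↥C') := Fintype.ofEquiv _ bD'.equivFun.toEquiv.symm
  have hcardD : Fintype.card (Dual (ZMod 2) ↥C) = 8 := by
    rw [Fintype.card_congr bD.equivFun.toEquiv]
    simp
  have hcardD' : Fintype.card (Dual (ZMod 2) ↥C') = 8 := by
    rw [Fintype.card_congr bD'.equivFun.toEquiv]
    simp
  -- the missing functional
  have himgcard : (Finset.univ.image ε).card = 6 := by
    rw [Finset.card_image_of_injective _ hεinj]
    simp
  have himgcard' : (Finset.univ.image ε').card = 6 := by
    rw [Finset.card_image_of_injective _ hεinj']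
    simp
  have h0nimg : (0 : Dual (ZMod 2) ↥C) ∉ Finset.univ.image ε := by
    simp only [Finset.mem_image, Finset.mem_univ, true_and]
    rintro ⟨i, hi⟩
    exact hεne i hi
  have h0nimg' : (0 : Dual (ZMod 2) ↥C') ∉ Finset.univ.image ε' := by
    simp only [Finset.mem_image, Finset.mem_univ, true_and]
    rintro ⟨i, hi⟩
    exact hεne' i hi
  have hDcard : ((Finset.univ : Finset (Dual (ZMod 2) ↥C)) \ insert 0 (Finset.univ.image ε)).card = 1 := by
    rw [Finset.card_sdiff_of_subset (Finset.subset_univ _), Finset.card_insert_of_notMem h0nimg,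
      himgcard, Finset.card_univ, hcardD]
  have hDcard' : ((Finset.univ : Finset (Dual (ZMod 2) ↥C')) \ insert 0 (Finset.univ.image ε')).card = 1 := by
    rw [Finset.card_sdiff_of_subset (Finset.subset_univ _), Finset.card_insert_of_notMem h0nimg',
      himgcard', Finset.card_univ, hcardD']
  obtain ⟨miss, hmiss⟩ := Finset.card_eq_one.1 hDcard
  obtain ⟨miss', hmiss'⟩ := Finset.card_eq_one.1 hDcard'
  have hmiss_mem : miss ∈ (Finset.univ : Finset (Dual (ZMod 2) ↥C)) \ insert 0 (Finset.univ.image ε) := by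
    rw [hmiss]; exact Finset.mem_singleton_self _
  have hmiss_mem' : miss' ∈ (Finset.univ : Finset (Dual (ZMod 2) ↥C')) \ insert 0 (Finset.univ.image ε') := by
    rw [hmiss']; exact Finset.mem_singleton_self _
  rw [Finset.mem_sdiff, Finset.mem_insert] at hmiss_mem hmiss_mem'
  push_neg at hmiss_mem hmiss_mem'
  obtain ⟨-, hmiss0, hmissimg⟩ := hmiss_mem
  obtain ⟨-, hmiss0', hmissimg'⟩ := hmiss_mem'
  have himg : Finset.univ.image ε = Finset.univ \ {0, miss} := by
    apply Finset.eq_of_subset_of_card_le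
    · intro x hx
      rw [Finset.mem_sdiff]
      refine ⟨Finset.mem_univ _, ?_⟩
      simp only [Finset.mem_insert, Finset.mem_singleton]
      rintro (rfl | rfl)
      · exact h0nimg hx
      · exact hmissimg hx
    · rw [Finset.card_sdiff_of_subset (Finset.subset_univ _), Finset.card_univ, hcardD, himgcard]
      rw [Finset.card_insert_of_notMem (by simpa using hmiss0.symm), Finset.card_singleton]
  have himg' : Finset.univ.image ε' = Finset.univ \ {0, miss'} := by
    apply Finset.eq_of_subset_of_card_le
    · intro x hx
      rw [Finset.mem_sdiff]
      refine ⟨Finset.mem_univ _, ?_⟩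
      simp only [Finset.mem_insert, Finset.mem_singleton]
      rintro (rfl | rfl)
      · exact h0nimg' hx
      · exact hmissimg' hx
    · rw [Finset.card_sdiff_of_subset (Finset.subset_univ _), Finset.card_univ, hcardD', himgcard']
      rw [Finset.card_insert_of_notMem (by simpa using hmiss0'.symm), Finset.card_singleton]
  -- a linear equivalence of duals sending miss to miss'
  have hli : LinearIndependent (ZMod 2)
      (fun x : ({miss} : Set (Dual (ZMod 2) ↥C)) => (x : Dual (ZMod 2) ↥C)) :=
    (linearIndepOn_singleton_iff (ZMod 2) (v := id)).2 hmiss0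
  have hli' : LinearIndependent (ZMod 2)
      (fun x : ({miss'} : Set (Dual (ZMod 2) ↥C')) => (x : Dual (ZMod 2) ↥C')) :=
    (linearIndepOn_singleton_iff (ZMod 2) (v := id)).2 hmiss0'
  set B := Basis.extend hli with hB
  set B' := Basis.extend hli' with hB'
  haveI : Fintype ↥(LinearIndepOn.extend (v := id) hli (Set.subset_univ _)) := IsNoetherian.fintypeBasisIndex B
  haveI : Fintype ↥(LinearIndepOn.extend (v := id) hli' (Set.subset_univ _)) := IsNoetherian.fintypeBasisIndex B'
  have hcardI : Fintype.card ↥(LinearIndepOn.extend (v := id) hli (Set.subset_univ _))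
      = Fintype.card ↥(LinearIndepOn.extend (v := id) hli' (Set.subset_univ _)) := by
    rw [← Module.finrank_eq_card_basis B, ← Module.finrank_eq_card_basis B',
      Subspace.dual_finrank_eq, Subspace.dual_finrank_eq, hC, hC']
  have hmem : miss ∈ LinearIndepOn.extend (v := id) hli (Set.subset_univ _) := LinearIndepOn.subset_extend (v := id) hli _ rfl
  have hmem' : miss' ∈ LinearIndepOn.extend (v := id) hli' (Set.subset_univ _) := LinearIndepOn.subset_extend (v := id) hli' _ rfl
  set e0 := Fintype.equivOfCardEq hcardI with he0
  set e := e0.trans (Equiv.swap (e0 ⟨miss, hmem⟩) ⟨miss', hmem'⟩) with he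
  set φ := B.equiv B' e with hφ
  have hφmiss : φ miss = miss' := by
    have h1 : miss = B ⟨miss, hmem⟩ := (Basis.extend_apply_self hli ⟨miss, hmem⟩).symm
    rw [h1, hφ, Basis.equiv_apply, he]
    simp only [Equiv.trans_apply, Equiv.swap_apply_left]
    exact Basis.extend_apply_self hli' ⟨miss', hmem'⟩
  -- the permutation
  have himgφ : Finset.univ.image (fun i => φ (ε i)) = Finset.univ.image ε' := by
    have h1 : Finset.univ.image (fun i => φ (ε i)) = (Finset.univ.image ε).image φ := by
      rw [Finset.image_image]; rfl
    have huniv : Finset.image (⇑φ) Finset.univ = Finset.univ :=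
      Finset.image_univ_of_surjective φ.surjective
    rw [h1, himg, Finset.image_sdiff _ _ φ.injective, huniv, Finset.image_insert,
      Finset.image_singleton, φ.map_zero, hφmiss, himg']
  have hstep : ∀ i, ∃ j, ε' j = φ (ε i) := by
    intro i
    have h1 : φ (ε i) ∈ Finset.univ.image (fun i => φ (ε i)) :=
      Finset.mem_image_of_mem _ (Finset.mem_univ i)
    rw [himgφ, Finset.mem_image] at h1
    obtain ⟨j, _, hj⟩ := h1
    exact ⟨j, hj⟩
  set σf : Fin 6 → Fin 6 := fun i => (hstep i).choose with hσf
  have hσfp : ∀ i, ε' (σf i) = φ (ε i) := fun i => (hstep i).choose_spec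
  have hσfinj : Function.Injective σf := by
    intro i j h
    apply hεinj
    apply φ.injective
    rw [← hσfp i, ← hσfp j, h]
  set σ : Equiv.Perm (Fin 6) := Equiv.ofBijective σf (Finite.injective_iff_bijective.1 hσfinj)
    with hσdef
  have hσp : ∀ i, ε' (σ i) = φ (ε i) := hσfp
  -- the induced map between the codes
  set ψ : ↥C ≃ₗ[ZMod 2] ↥C' :=
    (Module.evalEquiv (ZMod 2) ↥C).trans
      (φ.symm.dualMap.trans (Module.evalEquiv (ZMod 2) ↥C').symm) with hψdef
  have hψ : ∀ (x : ↥C) (f' : Dual (ZMod 2) ↥C'), f' (ψ x) = (φ.symm f') x := by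
    intro x f'
    rw [hψdef]
    simp only [LinearEquiv.trans_apply]
    rw [Module.apply_evalEquiv_symm_apply]
    rw [LinearEquiv.dualMap_apply]
    rw [Module.evalEquiv_apply, Module.Dual.eval_apply]
  have hkey : ∀ (x : ↥C) (i : Fin 6), (↑(ψ x) : V6) (σ i) = (↑x : V6) i := by
    intro x i
    have h1 : (↑(ψ x) : V6) (σ i) = ε' (σ i) (ψ x) := rfl
    rw [h1, hσp, hψ, LinearEquiv.symm_apply_apply]
    rfl
  -- conclude by cardinality
  have hsub : (↑C : Set V6) ⊆ pm σ '' (↑C' : Set V6) := by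
    intro x hx
    refine ⟨↑(ψ ⟨x, hx⟩), (ψ ⟨x, hx⟩).2, ?_⟩
    funext i
    exact hkey ⟨x, hx⟩ i
  have hcard1 : (↑C : Set V6).ncard = 8 := code_ncard C hC
  have hcard2 : (pm σ '' (↑C' : Set V6)).ncard = 8 := by
    rw [Set.ncard_image_of_injective _ (pm_inj σ), code_ncard C' hC']
  exact ⟨σ, (Set.eq_of_subset_of_ncard_le hsub (by rw [hcard1, hcard2]) (Set.toFinite _)).symm⟩

end

/-- **Uniqueness of the binary `[6,3,3]` code.** If `C, C' ⊆ F_2^6` are 3-dimensional linear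
codes all of whose nonzero vectors have Hamming weight at least 3, then `C` and `C'` are
permutation equivalent: some permutation `σ` of the 6 coordinates, acting by
`(σ·v) i = v (σ i)`, maps `C` onto `C'`. -/
theorem binary_633_code_unique (C C' : Submodule (ZMod 2) (Fin 6 → ZMod 2))
    (hC : Module.finrank (ZMod 2) ↥C = 3) (hC' : Module.finrank (ZMod 2) ↥C' = 3)
    (hwC : ∀ v ∈ C, v ≠ 0 → 3 ≤ (Finset.univ.filter fun i => v i ≠ 0).card)
    (hwC' : ∀ v ∈ C', v ≠ 0 → 3 ≤ (Finset.univ.filter fun i => v i ≠ 0).card) :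
    ∃ σ : Equiv.Perm (Fin 6),
      (fun v : Fin 6 → ZMod 2 => fun i => v (σ i)) '' ↑C = ↑C' := by
  obtain ⟨σ, h⟩ := main_half C' C hC' hC hwC' hwC
  exact ⟨σ, h⟩
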